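/- arXiv:2603.02659 — 4 statements merged into one kernel-verified Lean document; each statement's English description precedes it below -/
import Mathlib

section
/- If an ensemble of unitaries is given by a closed subgroup G of U(d) with some probability weighting w, and the weighted ensemble forms a weighted unitary t-design (i.e., its t-fold twirl channel equals the Haar t-fold twirl channel), then G itself is an unweighted unitary t-design (the uniform/Haar twirl over G equals the Haar twirl over U(d)). -/
open MeasureTheory Matrix

/-- `t`-fold tensor power of a `d × d` matrix, as a matrix indexed by `Fin t → Fin d`. -/
noncomputable def tpow (t : ℕ) {d : ℕ} (U : Matrix (Fin d) (Fin d) ℂ) :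
    Matrix (Fin t → Fin d) (Fin t → Fin d) ℂ :=
  Matrix.of fun x y => ∏ i, U (x i) (y i)

/-- The `t`-fold twirl `U^{†⊗t} X U^{⊗t}` of an operator `X` on `(ℂ^d)^{⊗t}`. -/
noncomputable def twirl (t : ℕ) {d : ℕ} (U : Matrix (Fin d) (Fin d) ℂ)
    (X : Matrix (Fin t → Fin d) (Fin t → Fin d) ℂ) :
    Matrix (Fin t → Fin d) (Fin t → Fin d) ℂ :=
  (tpow t U)ᴴ * X * tpow t U

open scoped ENNReal NNReal

lemma tpow_mul (t : ℕ) {d : ℕ} (A B : Matrix (Fin d) (Fin d) ℂ) :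
    tpow t (A * B) = tpow t A * tpow t B := by
  ext x y
  simp only [tpow, Matrix.of_apply, Matrix.mul_apply]
  rw [Finset.prod_univ_sum]
  rw [Fintype.piFinset_univ]
  congr 1
  funext z
  rw [Finset.prod_mul_distrib]

lemma twirl_twirl (t : ℕ) {d : ℕ} (A B : Matrix (Fin d) (Fin d) ℂ)
    (X : Matrix (Fin t → Fin d) (Fin t → Fin d) ℂ) :
    twirl t B (twirl t A X) = twirl t (A * B) X := by
  simp only [twirl, tpow_mul, Matrix.conjTranspose_mul, Matrix.mul_assoc]

lemma twirl_apply (t : ℕ) {d : ℕ} (V : Matrix (Fin d) (Fin d) ℂ)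
    (X : Matrix (Fin t → Fin d) (Fin t → Fin d) ℂ) (x y : Fin t → Fin d) :
    twirl t V X x y = ∑ p : (Fin t → Fin d) × (Fin t → Fin d),
      star (tpow t V p.1 x) * X p.1 p.2 * tpow t V p.2 y := by
  rw [Fintype.sum_prod_type]
  simp only [twirl, Matrix.mul_apply, Matrix.conjTranspose_apply, Finset.sum_mul]
  rw [Finset.sum_comm]

lemma tpow_norm_le (t : ℕ) {d : ℕ} {U : Matrix (Fin d) (Fin d) ℂ}
    (hU : U ∈ Matrix.unitaryGroup (Fin d) ℂ) (a b : Fin t → Fin d) :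
    ‖tpow t U a b‖ ≤ 1 := by
  simp only [tpow, Matrix.of_apply]
  rw [norm_prod]
  apply Finset.prod_le_one
  · intro i _; exact norm_nonneg _
  · intro i _; exact entry_norm_bound_of_unitary hU _ _

lemma twirl_norm_le (t : ℕ) {d : ℕ} {U : Matrix (Fin d) (Fin d) ℂ}
    (hU : U ∈ Matrix.unitaryGroup (Fin d) ℂ)
    (X : Matrix (Fin t → Fin d) (Fin t → Fin d) ℂ) (x y : Fin t → Fin d) :
    ‖twirl t U X x y‖ ≤ ∑ p : (Fin t → Fin d) × (Fin t → Fin d), ‖X p.1 p.2‖ := by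
  rw [twirl_apply]
  refine (norm_sum_le _ _).trans (Finset.sum_le_sum fun p _ => ?_)
  rw [norm_mul, norm_mul, norm_star]
  calc ‖tpow t U p.1 x‖ * ‖X p.1 p.2‖ * ‖tpow t U p.2 y‖
      ≤ 1 * ‖X p.1 p.2‖ * 1 := by
        apply mul_le_mul (mul_le_mul (tpow_norm_le t hU _ _) le_rfl (norm_nonneg _) zero_le_one)
          (tpow_norm_le t hU _ _) (norm_nonneg _) (by positivity)
    _ = ‖X p.1 p.2‖ := by ring

lemma cont_tpow (t : ℕ) {d : ℕ} (a b : Fin t → Fin d) :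
    Continuous fun A : Matrix (Fin d) (Fin d) ℂ => tpow t A a b := by
  simp only [tpow, Matrix.of_apply]
  exact continuous_finset_prod _ fun i _ => (continuous_id.matrix_elem _ _)

lemma cont_tpow' (t : ℕ) {d : ℕ} :
    Continuous fun A : Matrix (Fin d) (Fin d) ℂ => tpow t A :=
  continuous_matrix fun a b => cont_tpow t a b

lemma cont_twirl (t : ℕ) {d : ℕ} (X : Matrix (Fin t → Fin d) (Fin t → Fin d) ℂ)
    (x y : Fin t → Fin d) :
    Continuous fun A : Matrix (Fin d) (Fin d) ℂ => twirl t A X x y := by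
  exact Continuous.matrix_elem
    (((cont_tpow' t).matrix_conjTranspose.matrix_mul continuous_const).matrix_mul (cont_tpow' t))
    x y

lemma cont_integrable {Z : Type*} [TopologicalSpace Z] [CompactSpace Z] [MeasurableSpace Z]
    [OpensMeasurableSpace Z] (m : Measure Z) [IsFiniteMeasure m] {f : Z → ℂ}
    (hf : Continuous f) : Integrable f m :=
  hf.integrable_of_hasCompactSupport
    (IsCompact.of_isClosed_subset isCompact_univ (isClosed_tsupport f) (Set.subset_univ _))
instance instTGUG : IsTopologicalGroup (Matrix.unitaryGroup (Fin d) ℂ) where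
  continuous_mul := by
    apply continuous_induced_rng.2
    exact ((continuous_subtype_val.comp continuous_fst).matrix_mul
      (continuous_subtype_val.comp continuous_snd))
  continuous_inv := by
    apply continuous_induced_rng.2
    have : (fun U : Matrix.unitaryGroup (Fin d) ℂ => ((U⁻¹ : _) : Matrix (Fin d) (Fin d) ℂ))
        = fun U : Matrix.unitaryGroup (Fin d) ℂ => star (U : Matrix (Fin d) (Fin d) ℂ) := by
      funext U; rfl
    show Continuous fun U : Matrix.unitaryGroup (Fin d) ℂ => ((U⁻¹ : _) : Matrix (Fin d) (Fin d) ℂ)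
    rw [this]
    exact continuous_subtype_val.star

instance instCSUG : CompactSpace (Matrix.unitaryGroup (Fin d) ℂ) := by
  apply isCompact_iff_compactSpace.mp
  have hsub : (Matrix.unitaryGroup (Fin d) ℂ : Set (Matrix (Fin d) (Fin d) ℂ)) ⊆
      {A | ∀ i j, A i j ∈ Metric.closedBall (0:ℂ) 1} := by
    intro A hA i j
    simpa using entry_norm_bound_of_unitary hA i j
  have hcl : IsClosed (Matrix.unitaryGroup (Fin d) ℂ : Set (Matrix (Fin d) (Fin d) ℂ)) := by
    have h1 : IsClosed {A : Matrix (Fin d) (Fin d) ℂ | star A * A = 1} :=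
      isClosed_eq (Continuous.matrix_mul continuous_id.matrix_conjTranspose continuous_id)
        continuous_const
    have h2 : IsClosed {A : Matrix (Fin d) (Fin d) ℂ | A * star A = 1} :=
      isClosed_eq (Continuous.matrix_mul continuous_id continuous_id.matrix_conjTranspose)
        continuous_const
    have : (Matrix.unitaryGroup (Fin d) ℂ : Set (Matrix (Fin d) (Fin d) ℂ)) =
        {A | star A * A = 1} ∩ {A | A * star A = 1} := by
      ext A; exact Iff.rfl
    rw [this]; exact h1.inter h2
  have hcomp : IsCompact {A : Matrix (Fin d) (Fin d) ℂ | ∀ i j, A i j ∈ Metric.closedBall (0:ℂ) 1} := by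
    have : {A : Matrix (Fin d) (Fin d) ℂ | ∀ i j, A i j ∈ Metric.closedBall (0:ℂ) 1} =
        Set.pi Set.univ (fun _ : Fin d => Set.pi Set.univ fun _ : Fin d => Metric.closedBall (0:ℂ) 1) := by
      ext A
      constructor
      · intro h i _ j _
        exact h i j
      · intro h i j
        exact h i (Set.mem_univ i) j (Set.mem_univ j)
    rw [this]
    exact isCompact_univ_pi fun i => isCompact_univ_pi fun j => isCompact_closedBall _ _
  exact hcomp.of_isClosed_subset hcl hsub

lemma right_invariant
    [MeasurableSpace (Matrix.unitaryGroup (Fin d) ℂ)]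
    [BorelSpace (Matrix.unitaryGroup (Fin d) ℂ)]
    (μ : Measure (Matrix.unitaryGroup (Fin d) ℂ)) [IsProbabilityMeasure μ]
    (hμ : ∀ V : Matrix.unitaryGroup (Fin d) ℂ, Measure.map (fun U => V * U) μ = μ)
    (g : Matrix.unitaryGroup (Fin d) ℂ) :
    Measure.map (fun U => U * g) μ = μ := by
  haveI : μ.IsMulLeftInvariant := ⟨fun V => hμ V⟩
  haveI : μ.IsOpenPosMeasure :=
    isOpenPosMeasure_of_mulLeftInvariant_of_compact Set.univ isCompact_univ (by simp)
  haveI : μ.IsHaarMeasure := ⟨⟩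
  set μ' := Measure.map (fun U => U * g) μ with hμ'
  have hmg : Measurable (fun U : Matrix.unitaryGroup (Fin d) ℂ => U * g) :=
    (continuous_id.mul continuous_const).measurable
  haveI : IsProbabilityMeasure μ' := Measure.isProbabilityMeasure_map hmg.aemeasurable
  haveI : μ'.IsMulLeftInvariant := by
    constructor
    intro V
    have hmV : Measurable (fun U : Matrix.unitaryGroup (Fin d) ℂ => V * U) :=
      (continuous_const.mul continuous_id).measurable
    rw [hμ', Measure.map_map hmV hmg]
    have hco : ((fun U : Matrix.unitaryGroup (Fin d) ℂ => V * U) ∘ (fun U => U * g))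
        = ((fun U => U * g) ∘ (fun U => V * U)) := funext fun U => by
      simp [Function.comp, mul_assoc]
    rw [hco, ← Measure.map_map hmg hmV, hμ V]
  have key : ∀ s : Set (Matrix.unitaryGroup (Fin d) ℂ),
      μ' s = Measure.haarScalarFactor μ' μ • μ s := fun s =>
    Measure.measure_isMulInvariant_eq_smul_of_isCompact_closure μ' μ isClosed_closure.isCompact
  have huniv := key Set.univ
  simp only [measure_univ, smul_eq_mul] at huniv
  have hc : (Measure.haarScalarFactor μ' μ : ℝ≥0∞) = 1 := by
    rw [ENNReal.smul_def, smul_eq_mul, mul_one] at huniv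
    exact huniv.symm
  ext s _
  rw [key s, ENNReal.smul_def, smul_eq_mul, hc, one_mul]

/-- If a weighted ensemble supported on a closed subgroup `G` of `U(d)` forms a
weighted unitary `t`-design (its weighted twirl equals the Haar twirl over `U(d)`),
then `G` itself is an unweighted unitary `t`-design: the Haar twirl over `G`
(i.e. with respect to any left-invariant probability measure on `G`) equals the
Haar twirl over `U(d)`. -/
theorem stmt_1 (d t : ℕ)
    [MeasurableSpace (Matrix.unitaryGroup (Fin d) ℂ)]
    [BorelSpace (Matrix.unitaryGroup (Fin d) ℂ)]
    (μ : Measure (Matrix.unitaryGroup (Fin d) ℂ)) [IsProbabilityMeasure μ]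
    (hμ : ∀ V : Matrix.unitaryGroup (Fin d) ℂ,
      Measure.map (fun U => V * U) μ = μ)
    (G : Subgroup (Matrix.unitaryGroup (Fin d) ℂ))
    (hG : IsClosed (G : Set (Matrix.unitaryGroup (Fin d) ℂ)))
    (ν : Measure G) [IsProbabilityMeasure ν]
    (hν : ∀ h : G, Measure.map (fun g => h * g) ν = ν)
    (w : G → ℝ) (hw : ∀ g, 0 ≤ w g) (hw1 : HasSum w 1)
    (hdesign : ∀ (X : Matrix (Fin t → Fin d) (Fin t → Fin d) ℂ)
      (x y : Fin t → Fin d),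
      (∑' g : G, (w g : ℂ) *
        (twirl t (((g : Matrix.unitaryGroup (Fin d) ℂ) : Matrix (Fin d) (Fin d) ℂ)) X) x y)
        = ∫ U, (twirl t ((U : Matrix (Fin d) (Fin d) ℂ)) X) x y ∂μ) :
    ∀ (X : Matrix (Fin t → Fin d) (Fin t → Fin d) ℂ) (x y : Fin t → Fin d),
      (∫ g : G, (twirl t (((g : Matrix.unitaryGroup (Fin d) ℂ) : Matrix (Fin d) (Fin d) ℂ)) X) x y ∂ν)
        = ∫ U, (twirl t ((U : Matrix (Fin d) (Fin d) ℂ)) X) x y ∂μ := by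
  intro X x y
  haveI : CompactSpace G := isCompact_iff_compactSpace.mp hG.isCompact
  haveI : BorelSpace G :=
    Subtype.borelSpace (G : Set (Matrix.unitaryGroup (Fin d) ℂ))
  have cG : Continuous fun g : G => ((g : Matrix.unitaryGroup (Fin d) ℂ) : Matrix (Fin d) (Fin d) ℂ) :=
    continuous_subtype_val.comp continuous_subtype_val
  have intG : ∀ (f : Matrix (Fin d) (Fin d) ℂ → ℂ), Continuous f →
      Integrable (fun g : G => f ((g : Matrix.unitaryGroup (Fin d) ℂ) : Matrix (Fin d) (Fin d) ℂ)) ν :=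
    fun f hf => cont_integrable ν (hf.comp cG)
  have intU : ∀ (f : Matrix (Fin d) (Fin d) ℂ → ℂ), Continuous f →
      Integrable (fun U : Matrix.unitaryGroup (Fin d) ℂ => f (U : Matrix (Fin d) (Fin d) ℂ)) μ :=
    fun f hf => cont_integrable μ (hf.comp continuous_subtype_val)
  set Hm : Matrix (Fin t → Fin d) (Fin t → Fin d) ℂ :=
    Matrix.of (fun a b => ∫ U, (twirl t ((U : Matrix (Fin d) (Fin d) ℂ)) X) a b ∂μ) with hHm
  -- linear expansion of the ν-integral of a twirl
  have Fnu_eq : ∀ Y : Matrix (Fin t → Fin d) (Fin t → Fin d) ℂ,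
      (∫ g : G, (twirl t (((g : Matrix.unitaryGroup (Fin d) ℂ) : Matrix (Fin d) (Fin d) ℂ)) Y) x y ∂ν)
      = ∑ p : (Fin t → Fin d) × (Fin t → Fin d),
          (∫ g : G, star (tpow t (((g : Matrix.unitaryGroup (Fin d) ℂ) : Matrix (Fin d) (Fin d) ℂ)) p.1 x)
            * tpow t (((g : Matrix.unitaryGroup (Fin d) ℂ) : Matrix (Fin d) (Fin d) ℂ)) p.2 y ∂ν)
          * Y p.1 p.2 := by
    intro Y
    have h1 : ∀ g : G, (twirl t (((g : Matrix.unitaryGroup (Fin d) ℂ) : Matrix (Fin d) (Fin d) ℂ)) Y) x y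
        = ∑ p : (Fin t → Fin d) × (Fin t → Fin d),
            (star (tpow t (((g : Matrix.unitaryGroup (Fin d) ℂ) : Matrix (Fin d) (Fin d) ℂ)) p.1 x)
              * tpow t (((g : Matrix.unitaryGroup (Fin d) ℂ) : Matrix (Fin d) (Fin d) ℂ)) p.2 y) * Y p.1 p.2 := by
      intro g
      rw [twirl_apply]
      exact Finset.sum_congr rfl fun p _ => by ring
    simp_rw [h1]
    rw [integral_finset_sum]
    · exact Finset.sum_congr rfl fun p _ => integral_mul_const _ _
    · intro p _
      exact intG _ (((cont_tpow t p.1 x).star.mul (cont_tpow t p.2 y)).mul continuous_const)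
  -- summability
  have Sm : ∀ a b : Fin t → Fin d, Summable (fun h : G =>
      (w h : ℂ) * (twirl t (((h : Matrix.unitaryGroup (Fin d) ℂ) : Matrix (Fin d) (Fin d) ℂ)) X) a b) := by
    intro a b
    apply Summable.of_norm
    refine Summable.of_nonneg_of_le (fun h => norm_nonneg _) (fun h => ?_)
      (hw1.summable.mul_right (∑ p : (Fin t → Fin d) × (Fin t → Fin d), ‖X p.1 p.2‖))
    rw [norm_mul, Complex.norm_real, Real.norm_eq_abs, abs_of_nonneg (hw h)]
    exact mul_le_mul_of_nonneg_left
      (twirl_norm_le t (h : Matrix.unitaryGroup (Fin d) ℂ).2 X a b) (hw h)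
  -- invariance under ν
  have Fnu_inv : ∀ h : G,
      (∫ g : G, (twirl t (((g : Matrix.unitaryGroup (Fin d) ℂ) : Matrix (Fin d) (Fin d) ℂ))
        (twirl t (((h : Matrix.unitaryGroup (Fin d) ℂ) : Matrix (Fin d) (Fin d) ℂ)) X)) x y ∂ν)
      = ∫ g : G, (twirl t (((g : Matrix.unitaryGroup (Fin d) ℂ) : Matrix (Fin d) (Fin d) ℂ)) X) x y ∂ν := by
    intro h
    have hc : Continuous fun g : G => (twirl t (((g : Matrix.unitaryGroup (Fin d) ℂ) : Matrix (Fin d) (Fin d) ℂ)) X) x y :=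
      (cont_twirl t X x y).comp cG
    conv_rhs => rw [← hν h]
    rw [integral_map (φ := fun g => h * g)
      ((continuous_const.mul continuous_id).measurable).aemeasurable
      hc.aestronglyMeasurable]
    congr 1
    funext g
    rw [twirl_twirl]
    norm_cast
  -- invariance of Hm under right translation, using right invariance of μ
  have Hinv : ∀ V : Matrix.unitaryGroup (Fin d) ℂ,
      (twirl t (V : Matrix (Fin d) (Fin d) ℂ) Hm) x y = Hm x y := by
    intro V
    rw [twirl_apply]
    have h1 : ∀ p : (Fin t → Fin d) × (Fin t → Fin d),
        star (tpow t (V : Matrix (Fin d) (Fin d) ℂ) p.1 x) * Hm p.1 p.2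
          * tpow t (V : Matrix (Fin d) (Fin d) ℂ) p.2 y
        = ∫ U : Matrix.unitaryGroup (Fin d) ℂ,
            star (tpow t (V : Matrix (Fin d) (Fin d) ℂ) p.1 x)
              * (twirl t ((U : Matrix (Fin d) (Fin d) ℂ)) X) p.1 p.2
              * tpow t (V : Matrix (Fin d) (Fin d) ℂ) p.2 y ∂μ := by
      intro p
      rw [show Hm p.1 p.2 = ∫ U : Matrix.unitaryGroup (Fin d) ℂ,
        (twirl t ((U : Matrix (Fin d) (Fin d) ℂ)) X) p.1 p.2 ∂μ from rfl]
      rw [← integral_const_mul, ← integral_mul_const]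
    simp_rw [h1]
    rw [← integral_finset_sum]
    swap
    · intro p _
      exact intU _ ((continuous_const.mul (cont_twirl t X p.1 p.2)).mul continuous_const)
    have h2 : ∀ U : Matrix.unitaryGroup (Fin d) ℂ,
        (∑ p : (Fin t → Fin d) × (Fin t → Fin d),
          star (tpow t (V : Matrix (Fin d) (Fin d) ℂ) p.1 x)
            * (twirl t ((U : Matrix (Fin d) (Fin d) ℂ)) X) p.1 p.2
            * tpow t (V : Matrix (Fin d) (Fin d) ℂ) p.2 y)
        = (twirl t (((U * V : Matrix.unitaryGroup (Fin d) ℂ) : Matrix (Fin d) (Fin d) ℂ)) X) x y := by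
      intro U
      rw [← twirl_apply, twirl_twirl]
      norm_cast
    simp_rw [h2]
    rw [show Hm x y = ∫ U : Matrix.unitaryGroup (Fin d) ℂ,
      (twirl t ((U : Matrix (Fin d) (Fin d) ℂ)) X) x y ∂μ from rfl]
    have hc : Continuous fun U : Matrix.unitaryGroup (Fin d) ℂ =>
        (twirl t ((U : Matrix (Fin d) (Fin d) ℂ)) X) x y :=
      (cont_twirl t X x y).comp continuous_subtype_val
    conv_rhs => rw [← right_invariant μ hμ V]
    rw [integral_map (φ := fun U => U * V)
      ((continuous_id.mul continuous_const).measurable).aemeasurable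
      hc.aestronglyMeasurable]
  -- the total weight is 1
  have hsum1 : HasSum (fun h : G => (w h : ℂ)) 1 := by
    have := hw1.mapL Complex.ofRealCLM
    simpa using this
  -- main calculation
  calc (∫ g : G, (twirl t (((g : Matrix.unitaryGroup (Fin d) ℂ) : Matrix (Fin d) (Fin d) ℂ)) X) x y ∂ν)
      = (∑' h : G, (w h : ℂ)) * (∫ g : G, (twirl t (((g : Matrix.unitaryGroup (Fin d) ℂ) : Matrix (Fin d) (Fin d) ℂ)) X) x y ∂ν) := by
        rw [hsum1.tsum_eq, one_mul]
    _ = ∑' h : G, (w h : ℂ) * (∫ g : G, (twirl t (((g : Matrix.unitaryGroup (Fin d) ℂ) : Matrix (Fin d) (Fin d) ℂ)) X) x y ∂ν) := by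
        rw [tsum_mul_right]
    _ = ∑' h : G, (w h : ℂ) * (∫ g : G, (twirl t (((g : Matrix.unitaryGroup (Fin d) ℂ) : Matrix (Fin d) (Fin d) ℂ))
          (twirl t (((h : Matrix.unitaryGroup (Fin d) ℂ) : Matrix (Fin d) (Fin d) ℂ)) X)) x y ∂ν) :=
        tsum_congr fun h => by rw [Fnu_inv h]
    _ = ∑' h : G, ∑ p : (Fin t → Fin d) × (Fin t → Fin d),
          (∫ g : G, star (tpow t (((g : Matrix.unitaryGroup (Fin d) ℂ) : Matrix (Fin d) (Fin d) ℂ)) p.1 x)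
            * tpow t (((g : Matrix.unitaryGroup (Fin d) ℂ) : Matrix (Fin d) (Fin d) ℂ)) p.2 y ∂ν)
          * ((w h : ℂ) * (twirl t (((h : Matrix.unitaryGroup (Fin d) ℂ) : Matrix (Fin d) (Fin d) ℂ)) X) p.1 p.2) := by
        refine tsum_congr fun h => ?_
        rw [Fnu_eq (twirl t (((h : Matrix.unitaryGroup (Fin d) ℂ) : Matrix (Fin d) (Fin d) ℂ)) X), Finset.mul_sum]
        exact Finset.sum_congr rfl fun p _ => by ring
    _ = ∑ p : (Fin t → Fin d) × (Fin t → Fin d),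
          ∑' h : G, (∫ g : G, star (tpow t (((g : Matrix.unitaryGroup (Fin d) ℂ) : Matrix (Fin d) (Fin d) ℂ)) p.1 x)
            * tpow t (((g : Matrix.unitaryGroup (Fin d) ℂ) : Matrix (Fin d) (Fin d) ℂ)) p.2 y ∂ν)
          * ((w h : ℂ) * (twirl t (((h : Matrix.unitaryGroup (Fin d) ℂ) : Matrix (Fin d) (Fin d) ℂ)) X) p.1 p.2) :=
        Summable.tsum_finsetSum fun p _ => (Sm p.1 p.2).mul_left _
    _ = ∑ p : (Fin t → Fin d) × (Fin t → Fin d),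
          (∫ g : G, star (tpow t (((g : Matrix.unitaryGroup (Fin d) ℂ) : Matrix (Fin d) (Fin d) ℂ)) p.1 x)
            * tpow t (((g : Matrix.unitaryGroup (Fin d) ℂ) : Matrix (Fin d) (Fin d) ℂ)) p.2 y ∂ν)
          * Hm p.1 p.2 := by
        refine Finset.sum_congr rfl fun p _ => ?_
        rw [tsum_mul_left, hdesign X p.1 p.2]
        rfl
    _ = ∫ g : G, (twirl t (((g : Matrix.unitaryGroup (Fin d) ℂ) : Matrix (Fin d) (Fin d) ℂ)) Hm) x y ∂ν :=
        (Fnu_eq Hm).symm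
    _ = ∫ g : G, Hm x y ∂ν := by
        refine integral_congr_ae (Filter.Eventually.of_forall fun g => ?_)
        exact Hinv (g : Matrix.unitaryGroup (Fin d) ℂ)
    _ = Hm x y := by simp
    _ = ∫ U, (twirl t ((U : Matrix (Fin d) (Fin d) ℂ)) X) x y ∂μ := rfl
end

section
/- Let p be an odd prime. The d^2 + d states consisting of the computational basis {|0⟩, ..., |d-1⟩} together with the states |θ,φ⟩ = (1/√d) Σ_{n=0}^{d-1} exp[(2πi/p)(θn + φn²)] |n⟩ for θ, φ ∈ {0, 1, ..., p-1}, with weights w_Fock = 1/(d(d+1)) on each basis state and w_Phase = d/(p²(d+1)) on each phase state, form a weighted state 2-design in dimension d for any d ≤ p. -/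
open Complex

/-- The phase states `|θ,φ⟩ = (1/√d) ∑_n exp[(2πi/p)(θn + φn²)] |n⟩`. -/
noncomputable def phaseState (p d θ φ : ℕ) : Fin d → ℂ :=
  fun n => (1 / Real.sqrt d : ℝ) *
    Complex.exp (2 * Real.pi * Complex.I / p * ((θ : ℂ) * n + (φ : ℂ) * (n : ℂ) ^ 2))

private lemma exp_sum_aux (p : ℕ) (hp : 0 < p) (m : ℤ) :
    ∑ θ : Fin p, Complex.exp (2 * Real.pi * Complex.I / p * θ * m) =
      if (p : ℤ) ∣ m then (p : ℂ) else 0 := by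
  have hp0 : (p : ℂ) ≠ 0 := Nat.cast_ne_zero.mpr hp.ne'
  have hterm : ∀ θ : Fin p,
      Complex.exp (2 * Real.pi * Complex.I / p * θ * m)
        = (Complex.exp (2 * Real.pi * Complex.I / p * m)) ^ (θ : ℕ) := by
    intro θ
    rw [← Complex.exp_nat_mul]
    ring_nf
  simp_rw [hterm]
  rw [Fin.sum_univ_eq_sum_range]
  set ζ := Complex.exp (2 * Real.pi * Complex.I / p * m) with hζ
  by_cases hdvd : (p : ℤ) ∣ m
  · have : ζ = 1 := by
      obtain ⟨k, hk⟩ := hdvd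
      rw [hζ, hk]
      push_cast
      rw [show 2 * (Real.pi:ℂ) * Complex.I / p * (p * k) = k * (2 * Real.pi * Complex.I) by
        field_simp]
      exact Complex.exp_int_mul_two_pi_mul_I k
    simp [this, hdvd]
  · have hζ1 : ζ ≠ 1 := by
      intro h
      rw [hζ, Complex.exp_eq_one_iff] at h
      obtain ⟨n, hn⟩ := h
      apply hdvd
      refine ⟨n, ?_⟩
      have h2 : (2 * Real.pi * Complex.I) ≠ 0 := by
        simp [Real.pi_ne_zero, Complex.I_ne_zero]
      have : (m : ℂ) = p * n := by
        field_simp at hn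
        linear_combination hn
      exact_mod_cast this
    rw [geom_sum_eq hζ1]
    have hζp : ζ ^ p = 1 := by
      rw [hζ, ← Complex.exp_nat_mul]
      rw [show (p:ℂ) * (2 * Real.pi * Complex.I / p * m) = m * (2 * Real.pi * Complex.I) by
        field_simp]
      exact Complex.exp_int_mul_two_pi_mul_I m
    simp [hζp, hdvd]

private lemma key_aux (p d : ℕ) (hp : p.Prime) (hodd : Odd p) (hdp : d ≤ p) (a b c e : Fin d) :
    (((p:ℤ) ∣ ((a:ℤ) + b - c - e) ∧ (p:ℤ) ∣ ((a:ℤ)^2 + (b:ℤ)^2 - (c:ℤ)^2 - (e:ℤ)^2)))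
      ↔ ((a = c ∧ b = e) ∨ (a = e ∧ b = c)) := by
  haveI : Fact p.Prime := ⟨hp⟩
  constructor
  · rintro ⟨h1, h2⟩
    set A := ((a : ℕ) : ZMod p)
    set B := ((b : ℕ) : ZMod p)
    set C := ((c : ℕ) : ZMod p)
    set E := ((e : ℕ) : ZMod p)
    have h1' : A + B - C - E = 0 := by
      have := (ZMod.intCast_zmod_eq_zero_iff_dvd _ p).mpr h1
      push_cast at this
      exact this
    have h2' : A^2 + B^2 - C^2 - E^2 = 0 := by
      have := (ZMod.intCast_zmod_eq_zero_iff_dvd _ p).mpr h2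
      push_cast at this
      exact this
    have hp2 : p ≠ 2 := by
      rintro rfl
      exact (Nat.not_odd_iff_even.mpr (by norm_num)) hodd
    have htwo : (2 : ZMod p) ≠ 0 := by
      intro h0
      have hdvd2 : p ∣ 2 := by
        have := (ZMod.natCast_eq_zero_iff 2 p).mp (by exact_mod_cast h0)
        exact this
      exact hp2 ((Nat.prime_dvd_prime_iff_eq hp Nat.prime_two).mp hdvd2)
    have hab : A * B = C * E := by
      have h3 : (2 : ZMod p) * (A * B - C * E) = 0 := by
        linear_combination (A + B + C + E) * h1' - h2'
      rcases mul_eq_zero.mp h3 with h | h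
      · exact absurd h htwo
      · exact sub_eq_zero.mp h
    have hzero : (A - C) * (A - E) = 0 := by linear_combination A * h1' - hab
    have hinj : ∀ x y : Fin d, ((x : ℕ) : ZMod p) = ((y : ℕ) : ZMod p) → x = y := by
      intro x y hxy
      have hx : ((x : ℕ) : ZMod p).val = (x : ℕ) := ZMod.val_cast_of_lt (lt_of_lt_of_le x.2 hdp)
      have hy : ((y : ℕ) : ZMod p).val = (y : ℕ) := ZMod.val_cast_of_lt (lt_of_lt_of_le y.2 hdp)
      exact Fin.ext (by rw [← hx, ← hy, hxy])
    rcases mul_eq_zero.mp hzero with h | h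
    · left
      have hac : A = C := sub_eq_zero.mp h
      refine ⟨hinj a c hac, hinj b e ?_⟩
      have : B = E := by linear_combination h1' - hac
      exact this
    · right
      have hae : A = E := sub_eq_zero.mp h
      refine ⟨hinj a e hae, hinj b c ?_⟩
      have : B = C := by linear_combination h1' - hae
      exact this
  · rintro (⟨h1, h2⟩ | ⟨h1, h2⟩) <;> subst h1 <;> subst h2 <;>
      exact ⟨by ring_nf; simp, by ring_nf; simp⟩

private lemma prod_aux (p d : ℕ) (hp : p.Prime) (a b c e : Fin d) (θ φ : Fin p) :
    phaseState p d θ φ a * (starRingEnd ℂ) (phaseState p d θ φ c) *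
      phaseState p d θ φ b * (starRingEnd ℂ) (phaseState p d θ φ e)
    = (1 / (d:ℂ)^2) *
        (Complex.exp (2 * Real.pi * Complex.I / p * (θ : Fin p) * (((a:ℤ) + b - c - e : ℤ) : ℂ)) *
        Complex.exp (2 * Real.pi * Complex.I / p * (φ : Fin p) *
          (((a:ℤ)^2 + (b:ℤ)^2 - (c:ℤ)^2 - (e:ℤ)^2 : ℤ) : ℂ))) := by
  have hp0 : (p : ℂ) ≠ 0 := Nat.cast_ne_zero.mpr hp.pos.ne'
  unfold phaseState
  have hs : ((Real.sqrt d : ℝ) : ℂ) * ((Real.sqrt d : ℝ) : ℂ) = (d:ℂ) := by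
    rw [← Complex.ofReal_mul, Real.mul_self_sqrt (Nat.cast_nonneg d)]
    simp
  have hsq : ((1 / Real.sqrt d : ℝ) : ℂ) * ((1 / Real.sqrt d : ℝ) : ℂ) *
      (((1 / Real.sqrt d : ℝ) : ℂ) * ((1 / Real.sqrt d : ℝ) : ℂ)) = 1 / (d:ℂ)^2 := by
    rw [show ((1 / Real.sqrt d : ℝ) : ℂ) = 1 / ((Real.sqrt d : ℝ) : ℂ) by push_cast; ring]
    rw [div_mul_div_comm, div_mul_div_comm, hs]
    ring
  simp only [map_mul, ← Complex.exp_conj, map_div₀, map_add, map_pow, Complex.conj_ofReal,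
    Complex.conj_natCast, Complex.conj_I, map_ofNat]
  rw [show ∀ w x y z : ℂ, ∀ r : ℝ, (r:ℂ) * Complex.exp w * ((r:ℂ) * Complex.exp x) *
      ((r:ℂ) * Complex.exp y) * ((r:ℂ) * Complex.exp z)
      = ((r:ℂ) * (r:ℂ) * ((r:ℂ) * (r:ℂ))) * Complex.exp (w + x + y + z) by
    intro w x y z r
    rw [Complex.exp_add, Complex.exp_add, Complex.exp_add]; ring]
  rw [hsq, ← Complex.exp_add]
  congr 1
  push_cast
  field_simp
  ring

/-- For an odd prime `p` and any `d ≤ p`, the computational basis states with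
weight `1/(d(d+1))` each, together with the `p²` phase states with weight
`d/(p²(d+1))` each, form a weighted state 2-design in dimension `d`:
the weighted average of `(|ψ⟩⟨ψ|)^{⊗2}` equals `(2/(d(d+1))) Π_sym`, where
`Π_sym = (1/2)(I + SWAP)` (stated entrywise at `((a,b),(c,e))`). -/
theorem stmt_3 (p d : ℕ) (hp : p.Prime) (hodd : Odd p) (hd : 0 < d) (hdp : d ≤ p) :
    ∀ a b c e : Fin d,
      (∑ n : Fin d, (1 / ((d : ℂ) * ((d : ℂ) + 1))) *
          (if a = n ∧ b = n ∧ c = n ∧ e = n then 1 else 0))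
        + ∑ θ : Fin p, ∑ φ : Fin p, ((d : ℂ) / ((p : ℂ) ^ 2 * ((d : ℂ) + 1))) *
            (phaseState p d θ φ a * (starRingEnd ℂ) (phaseState p d θ φ c) *
              phaseState p d θ φ b * (starRingEnd ℂ) (phaseState p d θ φ e))
      = (2 / ((d : ℂ) * ((d : ℂ) + 1))) *
          ((1 / 2) * ((if a = c ∧ b = e then 1 else 0) + (if a = e ∧ b = c then 1 else 0))) := by
  intro a b c e
  have hd0 : (d : ℂ) ≠ 0 := Nat.cast_ne_zero.mpr hd.ne'
  have hd1 : (d : ℂ) + 1 ≠ 0 := by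
    have : ((d : ℂ) + 1) = ((d + 1 : ℕ) : ℂ) := by push_cast; ring
    rw [this]
    exact Nat.cast_ne_zero.mpr (Nat.succ_ne_zero d)
  have hp0 : (p : ℂ) ≠ 0 := Nat.cast_ne_zero.mpr hp.pos.ne'
  set K : ℤ := (a:ℤ) + b - c - e with hK
  set L : ℤ := (a:ℤ)^2 + (b:ℤ)^2 - (c:ℤ)^2 - (e:ℤ)^2 with hL
  -- first sum
  have hfirst : (∑ n : Fin d, (1 / ((d : ℂ) * ((d : ℂ) + 1))) *
      (if a = n ∧ b = n ∧ c = n ∧ e = n then 1 else 0))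
      = (1 / ((d : ℂ) * ((d : ℂ) + 1))) *
        (if b = a ∧ c = a ∧ e = a then 1 else 0) := by
    rw [← Finset.mul_sum]
    congr 1
    simp only [ite_and]
    rw [Finset.sum_ite_eq]
    simp
  -- phase sum
  have hphase : (∑ θ : Fin p, ∑ φ : Fin p, ((d : ℂ) / ((p : ℂ) ^ 2 * ((d : ℂ) + 1))) *
      (phaseState p d θ φ a * (starRingEnd ℂ) (phaseState p d θ φ c) *
        phaseState p d θ φ b * (starRingEnd ℂ) (phaseState p d θ φ e)))
      = ((d : ℂ) / ((p : ℂ) ^ 2 * ((d : ℂ) + 1))) * (1 / (d:ℂ)^2) *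
        ((∑ θ : Fin p, Complex.exp (2 * Real.pi * Complex.I / p * θ * (K : ℂ))) *
         (∑ φ : Fin p, Complex.exp (2 * Real.pi * Complex.I / p * φ * (L : ℂ)))) := by
    simp_rw [prod_aux p d hp a b c e]
    rw [Finset.sum_mul_sum]
    simp_rw [Finset.mul_sum]
    exact Finset.sum_congr rfl fun θ _ => Finset.sum_congr rfl fun φ _ => by ring
  rw [hfirst, hphase, exp_sum_aux p hp.pos K, exp_sum_aux p hp.pos L]
  have hkey := key_aux p d hp hodd hdp a b c e
  rw [← hK, ← hL] at hkey
  by_cases h1 : a = c ∧ b = e <;> by_cases h2 : a = e ∧ b = c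
  · obtain ⟨hac, hbe⟩ := h1
    obtain ⟨hae, hbc⟩ := h2
    obtain ⟨hK0, hL0⟩ := hkey.mpr (Or.inl ⟨hac, hbe⟩)
    rw [if_pos hK0, if_pos hL0, if_pos ⟨hbe.trans hae.symm, hac.symm, hae.symm⟩,
      if_pos ⟨hac, hbe⟩, if_pos ⟨hae, hbc⟩]
    field_simp [hd0, hd1, hp0]
  · obtain ⟨hK0, hL0⟩ := hkey.mpr (Or.inl h1)
    rw [if_pos hK0, if_pos hL0, if_neg ?_, if_pos h1, if_neg h2]
    · field_simp [hd0, hd1, hp0]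
      ring
    · rintro ⟨hba, hca, hea⟩
      exact h2 ⟨hea.symm, hba.trans hca.symm⟩
  · obtain ⟨hK0, hL0⟩ := hkey.mpr (Or.inr h2)
    rw [if_pos hK0, if_pos hL0, if_neg ?_, if_neg h1, if_pos h2]
    · field_simp [hd0, hd1, hp0]
    · rintro ⟨hba, hca, hea⟩
      exact h1 ⟨hca.symm, hba.trans hea.symm⟩
  · have hnot : ¬ ((p:ℤ) ∣ K ∧ (p:ℤ) ∣ L) := by
      intro h
      rcases hkey.mp h with h | h
      · exact h1 h
      · exact h2 h
    have hprod0 : (if (p:ℤ) ∣ K then (p:ℂ) else 0) * (if (p:ℤ) ∣ L then (p:ℂ) else 0) = 0 := by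
      by_cases hKd : (p:ℤ) ∣ K <;> by_cases hLd : (p:ℤ) ∣ L <;> simp [hKd, hLd]
      exact absurd ⟨hKd, hLd⟩ hnot
    rw [hprod0, if_neg ?_, if_neg h1, if_neg h2]
    · simp
    · rintro ⟨hba, hca, hea⟩
      exact h1 ⟨hca.symm, hba.trans hea.symm⟩
end

section
/- The integral identity: for real t > -1/2, (2^t/π) ∫_0^{2π} (1+cos Δ)^t (1-cos Δ)(1 - Δ/(2π)) dΔ = Γ(2t+1)/(Γ(t+1)Γ(t+2)). -/
open intervalIntegral Real MeasureTheory Set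

lemma beta_integrable (t : ℝ) (ht : -(1/2) < t) :
    IntervalIntegrable (fun x : ℝ => x ^ (t - 1/2) * (1 - x) ^ (1/2 : ℝ)) volume 0 1 := by
  apply IntervalIntegrable.mul_continuousOn (intervalIntegrable_rpow' (by linarith))
  have : Continuous fun x : ℝ => (1 - x) ^ (1/2 : ℝ) := by
    simp_rw [← Real.sqrt_eq_rpow]
    exact Real.continuous_sqrt.comp (by continuity)
  exact this.continuousOn

lemma beta_value (t : ℝ) (ht : -(1/2) < t) :
    ∫ x in (0:ℝ)..1, x ^ (t - 1/2) * (1 - x) ^ (1/2 : ℝ)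
      = Real.Gamma (t + 1/2) * Real.Gamma (3/2) / Real.Gamma (t + 2) := by
  have h1 : (0:ℝ) < t + 1/2 := by linarith
  have hbeta := Complex.Gamma_mul_Gamma_eq_betaIntegral
    (s := (t:ℂ) + 1/2) (t := 3/2) (by simpa using h1) (by norm_num)
  have hcoe : Complex.betaIntegral ((t:ℂ) + 1/2) (3/2)
      = ((∫ x in (0:ℝ)..1, x ^ (t - 1/2) * (1 - x) ^ (1/2 : ℝ) : ℝ) : ℂ) := by
    rw [Complex.betaIntegral, ← intervalIntegral.integral_ofReal]
    apply intervalIntegral.integral_congr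
    intro x hx
    rw [Set.uIcc_of_le (by norm_num : (0:ℝ) ≤ 1)] at hx
    obtain ⟨hx0, hx1⟩ := hx
    beta_reduce
    have e1 : ((t:ℂ) + 1/2 - 1) = ((t - 1/2 : ℝ) : ℂ) := by push_cast; ring
    have e2 : ((3:ℂ)/2 - 1) = ((1/2 : ℝ) : ℂ) := by norm_num
    have e3 : ((1:ℂ) - (x:ℂ)) = ((1 - x : ℝ) : ℂ) := by push_cast; ring
    rw [e1, e2, e3, ← Complex.ofReal_cpow hx0, ← Complex.ofReal_cpow (by linarith : (0:ℝ) ≤ 1 - x), ← Complex.ofReal_mul]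
  have hG : Complex.Gamma ((t:ℂ) + 1/2 + 3/2) = ((Real.Gamma (t+2) : ℝ) : ℂ) := by
    rw [← Complex.Gamma_ofReal]; norm_num; ring_nf
  have hG1 : Complex.Gamma ((t:ℂ) + 1/2) = ((Real.Gamma (t+1/2) : ℝ) : ℂ) := by
    rw [← Complex.Gamma_ofReal]; push_cast; ring_nf
  have hG2 : Complex.Gamma ((3:ℂ)/2) = ((Real.Gamma (3/2) : ℝ) : ℂ) := by
    rw [← Complex.Gamma_ofReal]; norm_num
  rw [hcoe, hG, hG1, hG2, ← Complex.ofReal_mul, ← Complex.ofReal_mul] at hbeta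
  have := Complex.ofReal_injective hbeta
  have hne : Real.Gamma (t + 2) ≠ 0 := (Real.Gamma_pos_of_pos (by linarith)).ne'
  rw [eq_div_iff hne]
  rw [mul_comm, ← this]

lemma half_id (Δ : ℝ) : 1 + Real.cos Δ = 2 * Real.cos (Δ/2) ^ 2 ∧
    1 - Real.cos Δ = 2 * Real.sin (Δ/2) ^ 2 := by
  have h := Real.cos_two_mul (Δ/2)
  rw [show 2*(Δ/2) = Δ by ring] at h
  have h2 := Real.sin_sq_add_cos_sq (Δ/2)
  constructor <;> linarith

lemma subst_lemma (t : ℝ) (ht : -(1/2) < t) :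
    IntegrableOn (fun Δ => (1 + Real.cos Δ) ^ t * (1 - Real.cos Δ)) (Set.Ioo 0 Real.pi) ∧
    ∫ Δ in Set.Ioo (0:ℝ) Real.pi, (1 + Real.cos Δ) ^ t * (1 - Real.cos Δ)
      = 2 ^ (t+1) * ∫ x in (0:ℝ)..1, x ^ (t - 1/2) * (1 - x) ^ (1/2 : ℝ) := by
  have pi_pos := Real.pi_pos
  set φ : ℝ → ℝ := fun Δ => Real.cos (Δ/2) ^ 2 with hφ
  set φ' : ℝ → ℝ := fun Δ => -(Real.cos (Δ/2) * Real.sin (Δ/2)) with hφ'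
  set f : ℝ → ℝ := fun x => x ^ (t - 1/2) * (1 - x) ^ (1/2 : ℝ) with hf
  set g : ℝ → ℝ := fun Δ => (1 + Real.cos Δ) ^ t * (1 - Real.cos Δ) with hg
  have hs : MeasurableSet (Set.Ioo (0:ℝ) Real.pi) := measurableSet_Ioo
  have hderiv : ∀ Δ ∈ Set.Ioo (0:ℝ) Real.pi, HasDerivWithinAt φ (φ' Δ) (Set.Ioo 0 Real.pi) Δ := by
    intro Δ _
    have h1 : HasDerivAt (fun Δ : ℝ => Δ/2) (1/2) Δ := (hasDerivAt_id Δ).div_const 2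
    have h2 := ((Real.hasDerivAt_cos (Δ/2)).comp Δ h1).pow 2
    apply HasDerivAt.hasDerivWithinAt
    convert h2 using 1
    · rfl
    · rfl
    · simp [hφ']
      ring
  have hinj : Set.InjOn φ (Set.Ioo 0 Real.pi) := by
    rintro a ⟨ha0, haπ⟩ b ⟨hb0, hbπ⟩ hab
    have hca : 0 < Real.cos (a/2) := Real.cos_pos_of_mem_Ioo ⟨by linarith, by linarith⟩
    have hcb : 0 < Real.cos (b/2) := Real.cos_pos_of_mem_Ioo ⟨by linarith, by linarith⟩
    simp only [hφ] at hab
    have hcc : Real.cos (a/2) = Real.cos (b/2) := by nlinarith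
    have := Real.injOn_cos (Set.mem_Icc.2 ⟨by linarith, by linarith⟩)
      (Set.mem_Icc.2 ⟨by linarith, by linarith⟩) hcc
    linarith
  have himg : φ '' (Set.Ioo 0 Real.pi) = Set.Ioo 0 1 := by
    ext x
    constructor
    · rintro ⟨Δ, ⟨h0, hπ⟩, rfl⟩
      have hc : 0 < Real.cos (Δ/2) := Real.cos_pos_of_mem_Ioo ⟨by linarith, by linarith⟩
      have hlt : Real.cos (Δ/2) < 1 := by
        have := Real.cos_lt_cos_of_nonneg_of_le_pi (x := 0) (y := Δ/2) le_rfl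
          (by linarith) (by linarith)
        simpa using this
      exact ⟨by positivity, by simp only [hφ]; nlinarith⟩
    · rintro ⟨hx0, hx1⟩
      have hs0 : (0:ℝ) ≤ Real.sqrt x := Real.sqrt_nonneg x
      have hs1 : Real.sqrt x < 1 := by
        rw [show (1:ℝ) = Real.sqrt 1 by simp]
        exact Real.sqrt_lt_sqrt hx0.le hx1
      have hsp : 0 < Real.sqrt x := Real.sqrt_pos.2 hx0
      refine ⟨2 * Real.arccos (Real.sqrt x), ⟨?_, ?_⟩, ?_⟩
      · have := Real.arccos_pos.2 hs1; linarith
      · have := Real.arccos_lt_pi_div_two.2 hsp; linarith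
      · simp only [hφ]
        rw [show 2 * Real.arccos (Real.sqrt x) / 2 = Real.arccos (Real.sqrt x) by ring,
          Real.cos_arccos (by linarith) hs1.le, Real.sq_sqrt hx0.le]
  have hpt : ∀ Δ ∈ Set.Ioo (0:ℝ) Real.pi,
      |φ' Δ| • f (φ Δ) = 2 ^ (-(t+1)) * g Δ := by
    rintro Δ ⟨h0, hπ⟩
    have hc : 0 < Real.cos (Δ/2) := Real.cos_pos_of_mem_Ioo ⟨by linarith, by linarith⟩
    have hsn : 0 < Real.sin (Δ/2) := Real.sin_pos_of_pos_of_lt_pi (by linarith) (by linarith)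
    have habs : |φ' Δ| = Real.cos (Δ/2) * Real.sin (Δ/2) := by
      simp only [hφ', abs_neg]
      exact abs_of_pos (by positivity)
    obtain ⟨e1, e2⟩ := half_id Δ
    have hB : (Real.cos (Δ/2) ^ 2) ^ (t - 1/2) = Real.cos (Δ/2) ^ (2*t - 1) := by
      rw [← Real.rpow_natCast (Real.cos (Δ/2)) 2, ← Real.rpow_mul hc.le]
      norm_num
      ring_nf
    have hsq : (1 : ℝ) - Real.cos (Δ/2) ^ 2 = Real.sin (Δ/2) ^ 2 := by
      have := Real.sin_sq_add_cos_sq (Δ/2); linarith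
    have hC : (Real.sin (Δ/2) ^ 2) ^ (1/2 : ℝ) = Real.sin (Δ/2) := by
      rw [← Real.sqrt_eq_rpow, Real.sqrt_sq hsn.le]
    have hD : (2 * Real.cos (Δ/2) ^ 2) ^ t = 2 ^ t * Real.cos (Δ/2) ^ (2*t) := by
      rw [Real.mul_rpow (by norm_num) (sq_nonneg _), ← Real.rpow_natCast (Real.cos (Δ/2)) 2,
        ← Real.rpow_mul hc.le]
      norm_num
    have hA : Real.cos (Δ/2) ^ (2*t) = Real.cos (Δ/2) ^ (2*t - 1) * Real.cos (Δ/2) := by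
      rw [show (2*t) = (2*t-1)+1 by ring, Real.rpow_add hc, Real.rpow_one]
      ring_nf
    have h2 : (2:ℝ) ^ (-(t+1)) * 2 ^ t = 2 ^ (-(1:ℝ)) := by
      rw [← Real.rpow_add two_pos]; norm_num
    simp only [hf, hg, hφ, smul_eq_mul, habs, e1, e2, hB, hsq, hC, hD]
    rw [show (2:ℝ) ^ (-(t+1)) * (2 ^ t * Real.cos (Δ/2) ^ (2*t) * (2 * Real.sin (Δ/2) ^ 2))
        = (2:ℝ) ^ (-(t+1)) * 2 ^ t * 2 * (Real.cos (Δ/2) ^ (2*t) * Real.sin (Δ/2) ^ 2) by ring,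
      h2, Real.rpow_neg_one, hA]
    ring
  have key := integral_image_eq_integral_abs_deriv_smul hs hderiv hinj f
  have keyInt := integrableOn_image_iff_integrableOn_abs_deriv_smul hs hderiv hinj f
  rw [himg] at key keyInt
  have hfInt : IntegrableOn f (Set.Ioo 0 1) := by
    have := (beta_integrable t ht).1
    exact this.mono_set Set.Ioo_subset_Ioc_self
  have hrInt : IntegrableOn (fun Δ => |φ' Δ| • f (φ Δ)) (Set.Ioo 0 Real.pi) := keyInt.1 hfInt
  have hgInt : IntegrableOn g (Set.Ioo 0 Real.pi) := by
    have h1 : IntegrableOn (fun Δ => (2:ℝ) ^ (-(t+1)) * g Δ) (Set.Ioo 0 Real.pi) :=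
      hrInt.congr_fun hpt hs
    have h2 : IntegrableOn (fun Δ => (2:ℝ)^(t+1) * ((2:ℝ) ^ (-(t+1)) * g Δ)) (Set.Ioo 0 Real.pi) :=
      h1.const_mul ((2:ℝ) ^ (t+1))
    apply MeasureTheory.IntegrableOn.congr_fun h2 _ hs
    intro Δ _
    beta_reduce
    rw [← mul_assoc, ← Real.rpow_add two_pos, show t + 1 + -(t+1) = 0 by ring,
      Real.rpow_zero, one_mul]
  constructor
  · exact hgInt
  · have hval : ∫ x in Set.Ioo (0:ℝ) 1, f x
        = (2:ℝ) ^ (-(t+1)) * ∫ Δ in Set.Ioo (0:ℝ) Real.pi, g Δ := by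
      rw [key, ← MeasureTheory.integral_const_mul]
      exact MeasureTheory.setIntegral_congr_fun hs hpt
    have hio : ∫ x in (0:ℝ)..1, f x = ∫ x in Set.Ioo (0:ℝ) 1, f x := by
      rw [intervalIntegral.integral_of_le (by norm_num), MeasureTheory.integral_Ioc_eq_integral_Ioo]
    rw [hio, hval, ← mul_assoc, ← Real.rpow_add two_pos, show t + 1 + -(t+1) = 0 by ring,
      Real.rpow_zero, one_mul]

/-- The integral identity: for real `t > -1/2`,
`(2^t/π) ∫_0^{2π} (1+cos Δ)^t (1-cos Δ)(1 - Δ/(2π)) dΔ = Γ(2t+1)/(Γ(t+1)Γ(t+2))`. -/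
theorem stmt_9 (t : ℝ) (ht : -(1 / 2) < t) :
    (2 ^ t / Real.pi) *
        ∫ Δ in (0:ℝ)..(2 * Real.pi),
          (1 + Real.cos Δ) ^ t * (1 - Real.cos Δ) * (1 - Δ / (2 * Real.pi))
      = Real.Gamma (2 * t + 1) / (Real.Gamma (t + 1) * Real.Gamma (t + 2)) := by
  have pi_pos := Real.pi_pos
  set g : ℝ → ℝ := fun Δ => (1 + Real.cos Δ) ^ t * (1 - Real.cos Δ) with hg
  obtain ⟨hgInt, hgVal⟩ := subst_lemma t (by linarith)
  -- reflection identity for g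
  have hrefl : ∀ x : ℝ, g (2 * Real.pi - x) = g x := by
    intro x
    simp only [hg]
    rw [show 2 * Real.pi - x = -(x - 2*Real.pi) by ring, Real.cos_neg, Real.cos_sub,
      Real.cos_two_pi, Real.sin_two_pi]
    ring_nf
  -- interval integrability of g on [0, π]
  have hIπ : IntervalIntegrable g volume 0 Real.pi := by
    rw [intervalIntegrable_iff_integrableOn_Ioo_of_le pi_pos.le]
    exact hgInt
  -- interval integrability of g on [π, 2π]
  have hIπ2 : IntervalIntegrable g volume Real.pi (2*Real.pi) := by
    have h := hIπ.comp_sub_left (2*Real.pi)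
    have he : (fun x => g (2*Real.pi - x)) = g := funext hrefl
    rw [he] at h
    rw [show 2*Real.pi - 0 = 2*Real.pi by ring, show 2*Real.pi - Real.pi = Real.pi by ring] at h
    exact h.symm
  have hI2 : IntervalIntegrable g volume 0 (2*Real.pi) := hIπ.trans hIπ2
  -- value of ∫_0^π g
  have hval1 : ∫ Δ in (0:ℝ)..Real.pi, g Δ
      = 2 ^ (t+1) * ∫ x in (0:ℝ)..1, x ^ (t - 1/2) * (1 - x) ^ (1/2 : ℝ) := by
    rw [intervalIntegral.integral_of_le pi_pos.le, MeasureTheory.integral_Ioc_eq_integral_Ioo]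
    exact hgVal
  -- value of ∫_π^2π g = ∫_0^π g
  have hval2 : ∫ Δ in Real.pi..(2*Real.pi), g Δ = ∫ Δ in (0:ℝ)..Real.pi, g Δ := by
    have h := intervalIntegral.integral_comp_sub_left (a := Real.pi) (b := 2*Real.pi)
      g (2*Real.pi)
    rw [show 2*Real.pi - 2*Real.pi = 0 by ring, show 2*Real.pi - Real.pi = Real.pi by ring] at h
    rw [← h]
    exact intervalIntegral.integral_congr fun x _ => (hrefl x).symm
  have hval : ∫ Δ in (0:ℝ)..(2*Real.pi), g Δ
      = 2 ^ (t+2) * ∫ x in (0:ℝ)..1, x ^ (t - 1/2) * (1 - x) ^ (1/2 : ℝ) := by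
    have hp : (2:ℝ)^(t+2) = 2^(t+1)*2 := by
      rw [show t+2 = (t+1)+1 by ring, Real.rpow_add two_pos, Real.rpow_one]
    rw [← intervalIntegral.integral_add_adjacent_intervals hIπ hIπ2, hval2, hval1, hp]
    ring
  -- weighted integrals
  have hw1 : IntervalIntegrable (fun Δ => g Δ * (1 - Δ / (2*Real.pi))) volume 0 (2*Real.pi) :=
    hI2.mul_continuousOn (by fun_prop)
  have hw2 : IntervalIntegrable (fun Δ => g Δ * (Δ / (2*Real.pi))) volume 0 (2*Real.pi) :=
    hI2.mul_continuousOn (by fun_prop)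
  have hsym : ∫ Δ in (0:ℝ)..(2*Real.pi), g Δ * (1 - Δ / (2*Real.pi))
      = ∫ Δ in (0:ℝ)..(2*Real.pi), g Δ * (Δ / (2*Real.pi)) := by
    have h := intervalIntegral.integral_comp_sub_left (a := (0:ℝ)) (b := 2*Real.pi)
      (fun Δ => g Δ * (Δ / (2*Real.pi))) (2*Real.pi)
    rw [show 2*Real.pi - 2*Real.pi = 0 by ring, show 2*Real.pi - 0 = 2*Real.pi by ring] at h
    rw [← h]
    apply intervalIntegral.integral_congr
    intro x _
    beta_reduce
    rw [hrefl x]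
    have : (2*Real.pi - x) / (2*Real.pi) = 1 - x / (2*Real.pi) := by
      field_simp
    rw [this]
  have hhalf : ∫ Δ in (0:ℝ)..(2*Real.pi), g Δ * (1 - Δ / (2*Real.pi))
      = (∫ Δ in (0:ℝ)..(2*Real.pi), g Δ) / 2 := by
    have hadd := intervalIntegral.integral_add hw1 hw2
    have he : ∀ x : ℝ, g x * (1 - x / (2*Real.pi)) + g x * (x / (2*Real.pi)) = g x := by
      intro x; ring
    simp_rw [he] at hadd
    rw [hsym] at hadd
    rw [hsym]
    linarith
  -- assemble
  have hmain : ∫ Δ in (0:ℝ)..(2*Real.pi),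
      (1 + Real.cos Δ) ^ t * (1 - Real.cos Δ) * (1 - Δ / (2 * Real.pi))
      = 2 ^ (t+1) * ∫ x in (0:ℝ)..1, x ^ (t - 1/2) * (1 - x) ^ (1/2 : ℝ) := by
    rw [show (∫ Δ in (0:ℝ)..(2*Real.pi),
        (1 + Real.cos Δ) ^ t * (1 - Real.cos Δ) * (1 - Δ / (2 * Real.pi)))
        = ∫ Δ in (0:ℝ)..(2*Real.pi), g Δ * (1 - Δ / (2*Real.pi)) from rfl,
      hhalf, hval, show (2:ℝ)^(t+2) = 2^(t+1)*2 by
        rw [show t+2 = (t+1)+1 by ring, Real.rpow_add two_pos, Real.rpow_one]]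
    ring
  rw [hmain, beta_value t (by linarith)]
  -- Gamma algebra
  have h32 : Real.Gamma (3/2) = Real.sqrt Real.pi / 2 := by
    rw [show (3:ℝ)/2 = 1/2 + 1 by norm_num, Real.Gamma_add_one (by norm_num),
      Real.Gamma_one_half_eq]
    ring
  have hdup := Real.Gamma_mul_Gamma_add_half (t + 1/2)
  rw [show t + 1/2 + 1/2 = t + 1 by ring, show 2*(t+1/2) = 2*t+1 by ring,
    show 1 - (2*t+1) = -(2*t) by ring] at hdup
  have hG1 : 0 < Real.Gamma (t+1) := Real.Gamma_pos_of_pos (by linarith)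
  have hG2 : 0 < Real.Gamma (t+2) := Real.Gamma_pos_of_pos (by linarith)
  have hsπ : Real.sqrt Real.pi * Real.sqrt Real.pi = Real.pi :=
    Real.mul_self_sqrt pi_pos.le
  have hsπ0 : 0 < Real.sqrt Real.pi := Real.sqrt_pos.2 pi_pos
  have e2 : (2:ℝ)^t * 2^(t+1) * 2^(-(2*t)) = 2 := by
    rw [← Real.rpow_add two_pos, ← Real.rpow_add two_pos,
      show t + (t+1) + -(2*t) = 1 by ring, Real.rpow_one]
  have hGh : Real.Gamma (t + 1/2)
      = Real.Gamma (2*t+1) * 2^(-(2*t)) * Real.sqrt Real.pi / Real.Gamma (t+1) := by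
    rw [eq_div_iff hG1.ne']
    exact hdup
  rw [h32, hGh]
  field_simp
  rw [show t * 2 = 2 * t by ring]
  linear_combination (Real.Gamma (2*t+1) * Real.sqrt Real.pi ^ 2) * e2 +
    (2 * Real.Gamma (2*t+1)) * hsπ
end

section
/- The multiplication action of SL₂(Z_d) on Z_d² is transitive on each set V_r = {(a,b) ∈ Z_d² : gcd(a,b,d) = r}, for each divisor r of d: for any (a,b) with gcd(a,b,d) = r, there is M ∈ SL₂(Z_d) with M·(r,0)ᵀ = (a,b)ᵀ. -/
/-- The multiplication action of `SL₂(ℤ_d)` on `ℤ_d²` is transitive on each set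
`V_r = {(a,b) : gcd(a,b,d) = r}` for `r ∣ d`: any `(a,b)` with `gcd(a,b,d) = r`
is the image of `(r,0)ᵀ` under some `M ∈ SL₂(ℤ_d)`. -/
theorem stmt_16 (d : ℕ) (hd : 0 < d) (r : ℕ) (hr : r ∣ d) (a b : ZMod d)
    (h : Nat.gcd (Nat.gcd a.val b.val) d = r) :
    ∃ M : Matrix.SpecialLinearGroup (Fin 2) (ZMod d),
      (M : Matrix (Fin 2) (Fin 2) (ZMod d)).mulVec ![(r : ZMod d), 0] = ![a, b] := by
  have : NeZero d := ⟨hd.ne'⟩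
  set g := Nat.gcd a.val b.val with hg
  by_cases hg0 : g = 0
  · -- a = b = 0, r = d
    have ha : a.val = 0 := Nat.eq_zero_of_gcd_eq_zero_left (hg ▸ hg0)
    have hb : b.val = 0 := Nat.eq_zero_of_gcd_eq_zero_right (hg ▸ hg0)
    have ha' : a = 0 := by rwa [ZMod.val_eq_zero] at ha
    have hb' : b = 0 := by rwa [ZMod.val_eq_zero] at hb
    have hrd : r = d := by rw [← h, hg0, Nat.gcd_zero_left]
    refine ⟨1, ?_⟩
    have : ((r : ℕ) : ZMod d) = 0 := by rw [hrd]; exact ZMod.natCast_self d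
    simp [this, ha', hb', Matrix.mulVec_one, Matrix.one_mulVec]
  · have hgpos : 0 < g := Nat.pos_of_ne_zero hg0
    have hrg : r ∣ g := h ▸ Nat.gcd_dvd_left g d
    have hrpos : 0 < r := by
      rw [← h]; exact Nat.gcd_pos_of_pos_right _ hd
    -- coprimality of g/r and d/r
    have hcop : Nat.Coprime (g / r) (d / r) := by
      have := Nat.coprime_div_gcd_div_gcd (m := g) (n := d)
        (by rw [h]; exact hrpos)
      rwa [h] at this
    -- get a unit k of ZMod d congruent to g/r mod d/r
    have hdvd : d / r ∣ d := Nat.div_dvd_of_dvd hr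
    obtain ⟨k, hk⟩ := ZMod.unitsMap_surjective hdvd (ZMod.unitOfCoprime (g / r) hcop)
    -- k * r = g in ZMod d
    have hkr : (k : ZMod d) * (r : ZMod d) = ((g : ℕ) : ZMod d) := by
      have h1 : ZMod.castHom hdvd (ZMod (d / r)) (k : ZMod d) = ((g / r : ℕ) : ZMod (d / r)) := by
        have := congrArg Units.val hk
        simpa [ZMod.unitsMap_def] using this
      have h2 : (((k : ZMod d).val : ℕ) : ZMod (d / r)) = ((g / r : ℕ) : ZMod (d / r)) := by
        rwa [ZMod.castHom_apply, ← ZMod.natCast_val] at h1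
      have h3 : (k : ZMod d).val ≡ g / r [MOD d / r] := (ZMod.natCast_eq_natCast_iff _ _ _).mp h2
      have h4 : (k : ZMod d).val * r ≡ (g / r) * r [MOD (d / r) * r] := h3.mul_right' r
      rw [Nat.div_mul_cancel hr, Nat.div_mul_cancel hrg] at h4
      calc (k : ZMod d) * (r : ZMod d) = (((k : ZMod d).val * r : ℕ) : ZMod d) := by
            push_cast [ZMod.natCast_val, ZMod.cast_id]; ring
        _ = ((g : ℕ) : ZMod d) := (ZMod.natCast_eq_natCast_iff _ _ _).mpr h4
    -- Bezout for a₁ = a.val / g, b₁ = b.val / g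
    set a₁ := a.val / g with ha₁
    set b₁ := b.val / g with hb₁
    have hab : Nat.Coprime a₁ b₁ := Nat.coprime_div_gcd_div_gcd hgpos
    obtain ⟨u, v, huv⟩ : ∃ u v : ℤ, (a₁ : ℤ) * v - (b₁ : ℤ) * u = 1 := by
      refine ⟨-(Nat.gcdB a₁ b₁), Nat.gcdA a₁ b₁, ?_⟩
      have := Nat.gcd_eq_gcd_ab a₁ b₁
      rw [hab] at this
      push_cast at this ⊢
      linarith
    -- the matrix
    set ki : ZMod d := ((k⁻¹ : (ZMod d)ˣ) : ZMod d) with hki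
    have hkki : (k : ZMod d) * ki = 1 := by
      rw [hki]; exact_mod_cast k.mul_inv
    refine ⟨⟨![![(a₁ : ZMod d) * k, (u : ZMod d) * ki],
              ![(b₁ : ZMod d) * k, (v : ZMod d) * ki]], ?_⟩, ?_⟩
    · erw [Matrix.det_fin_two]
      simp only [Matrix.cons_val', Matrix.cons_val_zero, Matrix.empty_val',
        Matrix.cons_val_fin_one, Matrix.cons_val_one, Matrix.head_cons, Matrix.head_fin_const]
      have : ((a₁ : ZMod d) * (v : ZMod d) - (b₁ : ZMod d) * (u : ZMod d)) = 1 := by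
        have := congrArg (fun z : ℤ => (z : ZMod d)) huv
        push_cast at this
        simpa using this
      calc (a₁ : ZMod d) * k * ((v : ZMod d) * ki) - (u : ZMod d) * ki * ((b₁ : ZMod d) * k)
          = ((a₁ : ZMod d) * (v : ZMod d) - (b₁ : ZMod d) * (u : ZMod d)) * ((k : ZMod d) * ki) := by
            ring
        _ = 1 := by rw [this, hkki, one_mul]
    · have hag : (a₁ : ZMod d) * (g : ZMod d) = a := by
        rw [← Nat.cast_mul, Nat.div_mul_cancel (Nat.gcd_dvd_left _ _)]
        simp [ZMod.natCast_val, ZMod.cast_id]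
      have hbg : (b₁ : ZMod d) * (g : ZMod d) = b := by
        rw [← Nat.cast_mul, Nat.div_mul_cancel (Nat.gcd_dvd_right _ _)]
        simp [ZMod.natCast_val, ZMod.cast_id]
      funext i
      fin_cases i <;>
        simp [Matrix.mulVec, dotProduct] <;>
        rw [mul_assoc, hkr] <;> [exact hag; exact hbg]
end
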